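/- Let D be a closed disk in ℝ² and Q = [a, a+h] × [b, b+h] a square with D ∩ Q ≠ ∅ and diam(Q) ≤ 2·diam(D). Then D contains at least one of the 25 sentinel points {(a + i·h/2, b + j·h/2) : i, j ∈ {-1, 0, 1, 2, 3}}. -/

import Mathlib

open Metric

/-- An axis-aligned square [a,a+h] × [b,b+h] in the Euclidean plane. -/
def square (a b h : ℝ) : Set (EuclideanSpace ℝ (Fin 2)) :=
  {p | p 0 ∈ Set.Icc a (a + h) ∧ p 1 ∈ Set.Icc b (b + h)}

/-- Builds a point of the Euclidean plane from two coordinates. -/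
noncomputable def pt2 (x y : ℝ) : EuclideanSpace ℝ (Fin 2) :=
  (WithLp.equiv 2 (Fin 2 → ℝ)).symm ![x, y]

lemma pt2_zero (x y : ℝ) : pt2 x y 0 = x := rfl
lemma pt2_one (x y : ℝ) : pt2 x y 1 = y := rfl

/-- One-dimensional key lemma: clamped rounding toward `c`. -/
lemma onedim_aux (a h c q : ℝ) (hh : 0 < h) (h1 : a ≤ q) (h2 : q ≤ a + h) :
    ∃ i : ℤ, -1 ≤ i ∧ i ≤ 3 ∧
      (|a + (i : ℝ) * (h / 2) - c| ≤ h / 4 ∨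
       (h / 2 ≤ |c - q| ∧ |a + (i : ℝ) * (h / 2) - c| ≤ |c - q| - h / 2)) := by
  have h2' : (0:ℝ) < h / 2 := by linarith
  set x : ℝ := (c - a) / (h / 2) with hx
  have hxr' := abs_le.mp (abs_sub_round x)
  have hcx : c = a + x * (h / 2) := by rw [hx, div_mul_cancel₀ _ h2'.ne']; ring
  rcases lt_or_ge (round x) (-1) with hr | hr
  · -- round x ≤ -2, so c ≤ a - 3h/4 : clamp to i = -1
    have hrle : (round x : ℝ) ≤ -2 := by exact_mod_cast (by omega : round x ≤ -2)
    have hxle : x ≤ -3/2 := by linarith [hxr'.2]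
    have hca : c - a ≤ -(3/4) * h := by nlinarith
    have hcq : |c - q| = q - c := by rw [abs_of_nonpos (by linarith)]; ring
    refine ⟨-1, le_refl _, by norm_num, Or.inr ⟨by rw [hcq]; linarith, ?_⟩⟩
    rw [hcq, abs_of_nonneg (by push_cast; linarith)]
    push_cast; linarith
  rcases lt_or_ge 3 (round x) with hr4 | hr4
  · -- round x ≥ 4, so c ≥ a + 7h/4 : clamp to i = 3
    have hrge : (4 : ℝ) ≤ (round x : ℝ) := by exact_mod_cast (by omega : (4:ℤ) ≤ round x)
    have hxge : (7:ℝ)/2 ≤ x := by linarith [hxr'.1]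
    have hca : (7/4) * h ≤ c - a := by nlinarith
    have hcq : |c - q| = c - q := abs_of_nonneg (by linarith)
    refine ⟨3, by norm_num, le_refl _, Or.inr ⟨by rw [hcq]; linarith, ?_⟩⟩
    rw [hcq, abs_of_nonpos (by push_cast; linarith)]
    push_cast; linarith
  · -- -1 ≤ round x ≤ 3 : take i = round x
    refine ⟨round x, hr, hr4, Or.inl ?_⟩
    have heq : a + (round x : ℝ) * (h / 2) - c = -((x - (round x : ℝ)) * (h / 2)) := by
      rw [hcx]; ring
    rw [heq, abs_neg, abs_mul, abs_of_pos h2']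
    nlinarith [abs_nonneg (x - (round x : ℝ)), abs_sub_round x]

/-- If a closed disk D intersects the square Q = [a,a+h] × [b,b+h]
and diam(Q) ≤ 2·diam(D), then D contains one of the 25 sentinel points
(a + i·h/2, b + j·h/2), i, j ∈ {-1,0,1,2,3}. -/
theorem stmt_7 (c : EuclideanSpace ℝ (Fin 2)) (ρ a b h : ℝ)
    (hρ : 0 < ρ) (hh : 0 < h)
    (hint : (closedBall c ρ ∩ square a b h).Nonempty)
    (hdiam : diam (square a b h) ≤ 2 * diam (closedBall c ρ)) :
    ∃ p ∈ closedBall c ρ, ∃ i j : ℤ,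
      -1 ≤ i ∧ i ≤ 3 ∧ -1 ≤ j ∧ j ≤ 3 ∧
      p 0 = a + i * (h / 2) ∧ p 1 = b + j * (h / 2) := by
  obtain ⟨q, hqD, hqQ⟩ := hint
  obtain ⟨⟨hq1, hq2⟩, hq3, hq4⟩ := hqQ
  have sqrt_le : ∀ s t : ℝ, 0 ≤ t → s ≤ t^2 → Real.sqrt s ≤ t := by
    intro s t ht hst
    calc Real.sqrt s ≤ Real.sqrt (t^2) := Real.sqrt_le_sqrt hst
    _ = t := Real.sqrt_sq ht
  -- two opposite corners of the square
  have hAQ : pt2 a b ∈ square a b h :=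
    ⟨⟨le_refl _, by rw [pt2_zero]; linarith⟩, le_refl _, by rw [pt2_one]; linarith⟩
  have hBQ : pt2 (a + h) (b + h) ∈ square a b h :=
    ⟨⟨by rw [pt2_zero]; linarith, le_refl _⟩, by rw [pt2_one]; linarith, le_refl _⟩
  have hbdd : Bornology.IsBounded (square a b h) := by
    apply (isBounded_closedBall (x := pt2 a b) (r := 2 * h)).subset
    intro p hp
    obtain ⟨⟨hp1, hp2⟩, hp3, hp4⟩ := hp
    have e := EuclideanSpace.dist_eq p (pt2 a b)
    rw [Fin.sum_univ_two, pt2_zero, pt2_one, Real.dist_eq, Real.dist_eq,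
      sq_abs, sq_abs] at e
    rw [mem_closedBall, e]
    exact sqrt_le _ _ (by linarith) (by nlinarith)
  have h8 : h^2 ≤ 8 * ρ^2 := by
    have hABle : dist (pt2 a b) (pt2 (a + h) (b + h)) ≤ 4 * ρ := by
      calc dist (pt2 a b) (pt2 (a + h) (b + h))
          ≤ diam (square a b h) := dist_le_diam_of_mem hbdd hAQ hBQ
      _ ≤ 2 * diam (closedBall c ρ) := hdiam
      _ ≤ 2 * (2 * ρ) := by linarith [diam_closedBall (x := c) hρ.le]
      _ = 4 * ρ := by ring
    have e := EuclideanSpace.dist_eq (pt2 a b) (pt2 (a + h) (b + h))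
    rw [Fin.sum_univ_two, pt2_zero, pt2_one, pt2_zero, pt2_one,
      Real.dist_eq, Real.dist_eq, sq_abs, sq_abs] at e
    rw [e] at hABle
    have h1 : (Real.sqrt ((a - (a+h))^2 + (b - (b+h))^2))^2 ≤ (4 * ρ)^2 :=
      pow_le_pow_left₀ (Real.sqrt_nonneg _) hABle 2
    rw [Real.sq_sqrt (by positivity)] at h1
    nlinarith
  -- coordinatewise distance from q to c
  have hqc : |c 0 - q 0|^2 + |c 1 - q 1|^2 ≤ ρ^2 := by
    have hd : dist q c ≤ ρ := mem_closedBall.mp hqD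
    have h1 : (dist q c)^2 ≤ ρ^2 := pow_le_pow_left₀ dist_nonneg hd 2
    rw [EuclideanSpace.dist_eq, Fin.sum_univ_two,
      Real.sq_sqrt (by positivity), Real.dist_eq, Real.dist_eq] at h1
    calc |c 0 - q 0|^2 + |c 1 - q 1|^2
        = |q 0 - c 0|^2 + |q 1 - c 1|^2 := by rw [abs_sub_comm, abs_sub_comm (c 1)]
    _ ≤ ρ^2 := h1
  obtain ⟨i, hi1, hi2, hi3⟩ := onedim_aux a h (c 0) (q 0) hh hq1 hq2
  obtain ⟨j, hj1, hj2, hj3⟩ := onedim_aux b h (c 1) (q 1) hh hq3 hq4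
  refine ⟨pt2 (a + (i:ℝ) * (h/2)) (b + (j:ℝ) * (h/2)), ?_, i, j, hi1, hi2, hj1, hj2,
    pt2_zero _ _, pt2_one _ _⟩
  rw [mem_closedBall, EuclideanSpace.dist_eq, Fin.sum_univ_two, pt2_zero, pt2_one,
    Real.dist_eq, Real.dist_eq]
  apply sqrt_le _ _ hρ.le
  have a0 := abs_nonneg (a + (i:ℝ) * (h/2) - c 0)
  have a1 := abs_nonneg (b + (j:ℝ) * (h/2) - c 1)
  have u0 := abs_nonneg (c 0 - q 0)
  have u1 := abs_nonneg (c 1 - q 1)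
  rcases hi3 with hi3 | ⟨hi4, hi3⟩ <;> rcases hj3 with hj3 | ⟨hj4, hj3⟩ <;> nlinarith
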